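/- There exists a compact set G ⊂ ℝ which is a tile (its integer translates {G + k : k ∈ ℤ} cover ℝ and any two distinct translates intersect in a set of Lebesgue measure zero) such that α(G) = 1 and s(G) = 1/3. -/

import Mathlib

open MeasureTheory Metric Filter Set Pointwise
open Topology
open scoped ENNReal

/-- The surface regularity of a set `G`:
`s(G) = sup { s ≥ 0 : ∃ C > 0, |G_ε| − |G| ≤ C ε^s for all ε ∈ (0,1] }`. -/
noncomputable def surfReg {E : Type*} [PseudoMetricSpace E] [MeasureSpace E] (G : Set E) : ℝ :=
  sSup {s : ℝ | 0 ≤ s ∧ ∃ C : ℝ, 0 < C ∧ ∀ ε : ℝ, 0 < ε → ε ≤ 1 →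
    (volume (cthickening ε G)).toReal - (volume G).toReal ≤ C * ε ^ s}

/-- The L¹-Hölder regularity of a set `G`:
`α(G) = sup { α ≥ 0 : ∃ C > 0, |(G+h) Δ G| ≤ C ‖h‖^α for all h }`. -/
noncomputable def holderReg {E : Type*} [NormedAddCommGroup E] [MeasureSpace E] (G : Set E) : ℝ :=
  sSup {α : ℝ | 0 ≤ α ∧ ∃ C : ℝ, 0 < C ∧ ∀ h : E,
    (volume (symmDiff ((fun x => x + h) '' G) G)).toReal ≤ C * ‖h‖ ^ α}

namespace TileAux


noncomputable def f (n : ℕ) : ℝ := 1 + (Real.sqrt (n + 1))⁻¹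

noncomputable def F : Set ℝ := insert 1 (Set.range f)

noncomputable def G : Set ℝ := Set.Icc 0 1 ∪ F

lemma sqrt_pos' (n : ℕ) : 0 < Real.sqrt (n + 1) := by
  apply Real.sqrt_pos.2; positivity

lemma one_le_sqrt (n : ℕ) : 1 ≤ Real.sqrt (n + 1) :=
  Real.one_le_sqrt.2 (by push_cast; linarith)

lemma f_mem (n : ℕ) : f n ∈ Set.Ioc (1:ℝ) 2 := by
  constructor
  · have := sqrt_pos' n
    simp only [f]; nlinarith [inv_pos.2 this]
  · have h1 := one_le_sqrt n
    have : (Real.sqrt (n+1))⁻¹ ≤ 1 := by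
      rw [inv_le_one_iff₀]; right; exact h1
    simp only [f]; linarith

lemma F_subset : F ⊆ Set.Icc 1 2 := by
  rintro x (rfl | ⟨n, rfl⟩)
  · constructor <;> norm_num
  · exact ⟨(f_mem n).1.le, (f_mem n).2⟩

lemma G_subset : G ⊆ Set.Icc 0 2 := by
  rintro x (hx | hx)
  · exact ⟨hx.1, by linarith [hx.2]⟩
  · have := F_subset hx; exact ⟨by linarith [this.1], this.2⟩

lemma F_countable : F.Countable := (Set.countable_range f).insert 1

lemma volume_F : volume F = 0 := F_countable.measure_zero _

lemma tendsto_f : Tendsto f atTop (𝓝 1) := by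
  have hs : Tendsto Real.sqrt atTop atTop := by
    apply tendsto_atTop_atTop_of_monotone (fun x y h => Real.sqrt_le_sqrt h)
    intro b
    exact ⟨(max b 0) ^ 2, by
      rw [Real.sqrt_sq (le_max_right b 0)]; exact le_max_left b 0⟩
  have h : Tendsto (fun n : ℕ => (Real.sqrt (n + 1))⁻¹) atTop (𝓝 0) := by
    apply Filter.Tendsto.inv_tendsto_atTop
    apply hs.comp
    apply Filter.tendsto_atTop_add_const_right
    exact tendsto_natCast_atTop_atTop
  have := h.const_add (1:ℝ)
  rw [add_zero] at this
  exact this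

lemma compactF : IsCompact F := tendsto_f.isCompact_insert_range

lemma compactG : IsCompact G := isCompact_Icc.union compactF

lemma one_mem_G : (1:ℝ) ∈ G := Or.inl ⟨by norm_num, le_refl 1⟩

lemma f_mem_G (n : ℕ) : f n ∈ G := Or.inr (Or.inr ⟨n, rfl⟩)

lemma volume_G : volume G = 1 := by
  have h1 : volume G ≤ 1 := by
    calc volume G ≤ volume (Set.Icc (0:ℝ) 1) + volume F := measure_union_le _ _
    _ = 1 := by rw [volume_F, Real.volume_Icc]; norm_num
  have h2 : (1:ℝ≥0∞) ≤ volume G := by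
    calc (1:ℝ≥0∞) = volume (Set.Icc (0:ℝ) 1) := by rw [Real.volume_Icc]; norm_num
    _ ≤ volume G := measure_mono Set.subset_union_left
  exact le_antisymm h1 h2

lemma f_antitone : StrictAnti f := by
  intro m n hmn
  simp only [f, add_lt_add_iff_left]
  have hmn' : (m:ℝ) < n := by exact_mod_cast hmn
  apply inv_strictAnti₀ (sqrt_pos' m)
  apply Real.sqrt_lt_sqrt (by positivity)
  linarith

lemma gap (n : ℕ) : 1 / (2 * ((n:ℝ) + 2) * Real.sqrt ((n:ℝ) + 2)) ≤ f n - f (n + 1) := by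
  have ha : 0 < Real.sqrt ((n:ℝ) + 1) := sqrt_pos' n
  have hb : 0 < Real.sqrt ((n:ℝ) + 2) := Real.sqrt_pos.2 (by positivity)
  set a := Real.sqrt ((n:ℝ) + 1) with hadef
  set b := Real.sqrt ((n:ℝ) + 2) with hbdef
  have ha2 : a ^ 2 = (n:ℝ) + 1 := Real.sq_sqrt (by positivity)
  have hb2 : b ^ 2 = (n:ℝ) + 2 := Real.sq_sqrt (by positivity)
  have hab : a ≤ b := Real.sqrt_le_sqrt (by linarith)
  have hcast : ((n + 1 : ℕ) : ℝ) + 1 = (n:ℝ) + 2 := by push_cast; ring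
  have hfn : f n - f (n + 1) = a⁻¹ - b⁻¹ := by
    simp only [f, hcast, hadef, hbdef]; ring
  rw [hfn]
  have e1 : a⁻¹ - b⁻¹ = (b - a) / (a * b) := by
    field_simp
  have e2 : b - a = 1 / (a + b) := by
    rw [eq_div_iff (by positivity)]
    linear_combination hb2 - ha2
  rw [e1, e2, div_div]
  rw [← hb2]
  apply one_div_le_one_div_of_le (by positivity)
  nlinarith



lemma cover : (⋃ k : ℤ, (fun x => x + (k : ℝ)) '' G) = Set.univ := by
  ext x
  simp only [Set.mem_iUnion, Set.mem_univ, iff_true]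
  refine ⟨⌊x⌋, x - ⌊x⌋, Or.inl ⟨?_, ?_⟩, by ring⟩
  · linarith [Int.floor_le x]
  · linarith [Int.lt_floor_add_one x]

lemma image_G (h : ℝ) : (fun x => x + h) '' G = Set.Icc h (1 + h) ∪ ((fun x => x + h) '' F) := by
  rw [G, Set.image_union, Set.image_add_const_Icc]
  norm_num

lemma overlap (k l : ℤ) (hkl : k ≠ l) :
    volume (((fun x => x + (k : ℝ)) '' G) ∩ ((fun x => x + (l : ℝ)) '' G)) = 0 := by
  have hsub : ((fun x => x + (k : ℝ)) '' G) ∩ ((fun x => x + (l : ℝ)) '' G) ⊆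
      (Set.Icc (k:ℝ) (1 + k) ∩ Set.Icc (l:ℝ) (1 + l)) ∪
      (((fun x => x + (k:ℝ)) '' F) ∪ ((fun x => x + (l:ℝ)) '' F)) := by
    rintro x ⟨hxk, hxl⟩
    rw [image_G] at hxk hxl
    rcases hxk with hxk | hxk
    · rcases hxl with hxl | hxl
      · exact Or.inl ⟨hxk, hxl⟩
      · exact Or.inr (Or.inr hxl)
    · exact Or.inr (Or.inl hxk)
  refine measure_mono_null hsub ?_
  apply measure_union_null
  · rw [Set.Icc_inter_Icc, Real.volume_Icc]
    rw [ENNReal.ofReal_eq_zero]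
    rcases hkl.lt_or_gt with h | h
    · have : (k:ℝ) + 1 ≤ l := by exact_mod_cast Int.add_one_le_iff.2 h
      have h1 : min (1 + (k:ℝ)) (1 + l) = 1 + (k:ℝ) := min_eq_left (by linarith)
      have h2 : max (k:ℝ) (l:ℝ) = l := max_eq_right (by linarith)
      rw [h1, h2]; linarith
    · have : (l:ℝ) + 1 ≤ k := by exact_mod_cast Int.add_one_le_iff.2 h
      have h1 : min (1 + (k:ℝ)) (1 + l) = 1 + (l:ℝ) := min_eq_right (by linarith)
      have h2 : max (k:ℝ) (l:ℝ) = k := max_eq_left (by linarith)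
      rw [h1, h2]; linarith
  · apply measure_union_null <;> exact (F_countable.image _).measure_zero _

lemma symmDiff_subset (h : ℝ) :
    symmDiff ((fun x => x + h) '' G) G ⊆
      (Set.Icc (min 0 h) (max 0 h) ∪ Set.Icc (min 1 (1 + h)) (max 1 (1 + h))) ∪
      (((fun x => x + h) '' F) ∪ F) := by
  intro x hx
  rw [Set.mem_symmDiff] at hx
  rcases hx with ⟨hxin, hxout⟩ | ⟨hxin, hxout⟩
  · rw [image_G] at hxin
    rcases hxin with hxin | hxin
    · have hxout' : x ∉ Set.Icc (0:ℝ) 1 := fun hc => hxout (Or.inl hc)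
      rw [Set.mem_Icc, not_and_or, not_le, not_le] at hxout'
      rcases hxout' with hc | hc
      · refine Or.inl (Or.inl ⟨?_, ?_⟩)
        · exact le_trans (min_le_right _ _) hxin.1
        · exact le_trans hc.le (le_max_left _ _)
      · refine Or.inl (Or.inr ⟨?_, ?_⟩)
        · exact le_trans (min_le_left _ _) hc.le
        · exact le_trans hxin.2 (le_max_right _ _)
    · exact Or.inr (Or.inl hxin)
  · rcases hxin with hxin | hxin
    · have hxout' : x ∉ Set.Icc h (1 + h) := by
        intro hc; exact hxout (by rw [image_G]; exact Or.inl hc)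
      rw [Set.mem_Icc, not_and_or, not_le, not_le] at hxout'
      rcases hxout' with hc | hc
      · refine Or.inl (Or.inl ⟨?_, ?_⟩)
        · exact le_trans (min_le_left _ _) hxin.1
        · exact le_trans hc.le (le_max_right _ _)
      · refine Or.inl (Or.inr ⟨?_, ?_⟩)
        · exact le_trans (min_le_right _ _) hc.le
        · exact le_trans hxin.2 (le_max_left _ _)
    · exact Or.inr (Or.inr hxin)

lemma volume_symmDiff_le (h : ℝ) :
    volume (symmDiff ((fun x => x + h) '' G) G) ≤ ENNReal.ofReal (2 * |h|) := by
  refine le_trans (measure_mono (symmDiff_subset h)) ?_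
  refine le_trans (measure_union_le _ _) ?_
  have hF : volume (((fun x => x + h) '' F) ∪ F) = 0 := by
    apply measure_union_null
    · exact (F_countable.image _).measure_zero _
    · exact volume_F
  rw [hF, add_zero]
  refine le_trans (measure_union_le _ _) ?_
  rw [Real.volume_Icc, Real.volume_Icc, max_sub_min_eq_abs, max_sub_min_eq_abs]
  rw [← ENNReal.ofReal_add (abs_nonneg _) (abs_nonneg _)]
  apply ENNReal.ofReal_le_ofReal
  rw [sub_zero, show (1:ℝ) + h - 1 = h by ring]
  linarith

lemma symmDiff_ne_top (h : ℝ) : volume (symmDiff ((fun x => x + h) '' G) G) ≠ ⊤ := by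
  apply ne_of_lt
  exact lt_of_le_of_lt (volume_symmDiff_le h) ENNReal.ofReal_lt_top

lemma symmDiff_lower (h : ℝ) (h0 : 0 < h) (h1 : h ≤ 1) :
    ENNReal.ofReal h ≤ volume (symmDiff ((fun x => x + h) '' G) G) := by
  have hsub : Set.Ico (0:ℝ) h ⊆ symmDiff ((fun x => x + h) '' G) G := by
    intro x hx
    rw [Set.mem_symmDiff]
    refine Or.inr ⟨Or.inl ⟨hx.1, le_trans hx.2.le h1⟩, ?_⟩
    rw [image_G]
    rintro (hc | ⟨y, hy, rfl⟩)
    · exact absurd hc.1 (not_le.2 hx.2)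
    · have := (F_subset hy).1
      have : (1:ℝ) + h ≤ y + h := by linarith
      have hxlt : y + h < h := lt_of_lt_of_le hx.2 (by linarith)
      linarith
  calc ENNReal.ofReal h = volume (Set.Ico (0:ℝ) h) := by rw [Real.volume_Ico, sub_zero]
  _ ≤ _ := measure_mono hsub



lemma inv_sqrt_le {ε : ℝ} (hε : 0 < ε) {n : ℕ} (hn : ε ^ (-(2:ℝ)/3) ≤ (n:ℝ) + 1) :
    (Real.sqrt ((n:ℝ) + 1))⁻¹ ≤ ε ^ ((1:ℝ)/3) := by
  have h13 : (0:ℝ) < ε ^ (-(1:ℝ)/3) := Real.rpow_pos_of_pos hε _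
  have hsq : ε ^ (-(2:ℝ)/3) = (ε ^ (-(1:ℝ)/3)) ^ (2:ℕ) := by
    rw [← Real.rpow_natCast (ε ^ (-(1:ℝ)/3)) 2, ← Real.rpow_mul hε.le]
    norm_num
  have h1 : ε ^ (-(1:ℝ)/3) ≤ Real.sqrt ((n:ℝ) + 1) := by
    have : Real.sqrt (ε ^ (-(2:ℝ)/3)) ≤ Real.sqrt ((n:ℝ) + 1) := Real.sqrt_le_sqrt hn
    rwa [hsq, Real.sqrt_sq h13.le] at this
  have h2 : (Real.sqrt ((n:ℝ) + 1))⁻¹ ≤ (ε ^ (-(1:ℝ)/3))⁻¹ := by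
    apply inv_anti₀ h13 h1
  have hinv : (ε ^ (-(1:ℝ)/3))⁻¹ = ε ^ ((1:ℝ)/3) := by
    rw [show -(1:ℝ)/3 = -((1:ℝ)/3) by norm_num, Real.rpow_neg hε.le, inv_inv]
  rwa [hinv] at h2

lemma cthick_subset {ε : ℝ} (hε : 0 < ε) :
    cthickening ε G ⊆ (Set.Icc (-ε) (1+ε) ∪ Set.Icc (1-ε) (1 + ε ^ ((1:ℝ)/3) + ε)) ∪
      ⋃ n ∈ Finset.range ⌈ε ^ (-(2:ℝ)/3)⌉₊, Set.Icc (f n - ε) (f n + ε) := by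
  rw [compactG.cthickening_eq_biUnion_closedBall hε.le]
  refine Set.iUnion₂_subset fun y hy => ?_
  rw [Real.closedBall_eq_Icc]
  rcases hy with hy | rfl | ⟨n, rfl⟩
  · intro x hx
    refine Or.inl (Or.inl ⟨?_, ?_⟩)
    · have := hy.1; have := hx.1; linarith
    · have := hy.2; have := hx.2; linarith
  · intro x hx
    refine Or.inl (Or.inl ⟨?_, ?_⟩)
    · have := hx.1; linarith
    · have := hx.2; linarith
  · by_cases hn : n < ⌈ε ^ (-(2:ℝ)/3)⌉₊
    · intro x hx
      exact Or.inr (Set.mem_biUnion (Finset.mem_range.2 hn) hx)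
    · push_neg at hn
      intro x hx
      refine Or.inl (Or.inr ⟨?_, ?_⟩)
      · have h1 := (f_mem n).1
        have := hx.1; linarith
      · have h2 : (Real.sqrt ((n:ℝ)+1))⁻¹ ≤ ε ^ ((1:ℝ)/3) := by
          apply inv_sqrt_le hε
          have := Nat.le_ceil (ε ^ (-(2:ℝ)/3))
          have hn' : (⌈ε ^ (-(2:ℝ)/3)⌉₊ : ℝ) ≤ (n:ℝ) := by exact_mod_cast hn
          linarith
        have := hx.2
        have hf : f n ≤ 1 + ε ^ ((1:ℝ)/3) := by
          simp only [f]; linarith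
        linarith

lemma thick_upper {ε : ℝ} (hε : 0 < ε) (hε1 : ε ≤ 1) :
    (volume (cthickening ε G)).toReal - (volume G).toReal ≤ 9 * ε ^ ((1:ℝ)/3) := by
  set N := ⌈ε ^ (-(2:ℝ)/3)⌉₊ with hN
  have hNle : (N:ℝ) ≤ ε ^ (-(2:ℝ)/3) + 1 := by
    have := Nat.ceil_lt_add_one (le_of_lt (Real.rpow_pos_of_pos hε (-(2:ℝ)/3)))
    exact this.le
  have hvol : volume (cthickening ε G) ≤
      ENNReal.ofReal (1 + 2*ε) + ENNReal.ofReal (ε ^ ((1:ℝ)/3) + 2*ε) +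
        ENNReal.ofReal ((ε ^ (-(2:ℝ)/3) + 1) * (2*ε)) := by
    refine le_trans (measure_mono (cthick_subset hε)) ?_
    refine le_trans (measure_union_le _ _)
      (add_le_add (le_trans (measure_union_le _ _) (add_le_add ?_ ?_)) ?_)
    · rw [Real.volume_Icc]
      exact ENNReal.ofReal_le_ofReal (by linarith)
    · rw [Real.volume_Icc]
      exact ENNReal.ofReal_le_ofReal (by linarith [Real.rpow_pos_of_pos hε ((1:ℝ)/3)])
    · refine le_trans (measure_biUnion_finset_le _ _) ?_
      have hone : ∀ n ∈ Finset.range N, volume (Set.Icc (f n - ε) (f n + ε)) = ENNReal.ofReal (2*ε) := by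
        intro n _
        rw [Real.volume_Icc]
        congr 1; ring
      rw [Finset.sum_congr rfl hone, Finset.sum_const, Finset.card_range, nsmul_eq_mul]
      calc (N:ℝ≥0∞) * ENNReal.ofReal (2*ε)
          = ENNReal.ofReal (N:ℝ) * ENNReal.ofReal (2*ε) := by rw [ENNReal.ofReal_natCast]
        _ ≤ ENNReal.ofReal (ε ^ (-(2:ℝ)/3) + 1) * ENNReal.ofReal (2*ε) := by
            gcongr
        _ = ENNReal.ofReal ((ε ^ (-(2:ℝ)/3) + 1) * (2*ε)) := by
            rw [← ENNReal.ofReal_mul]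
            positivity
  have hcomb : volume (cthickening ε G) ≤
      ENNReal.ofReal (1 + 6*ε + 3 * ε ^ ((1:ℝ)/3)) := by
    refine le_trans hvol ?_
    rw [← ENNReal.ofReal_add (by positivity) (by positivity),
        ← ENNReal.ofReal_add (by positivity) (by positivity)]
    apply ENNReal.ofReal_le_ofReal
    have hkey : ε ^ (-(2:ℝ)/3) * (2*ε) = 2 * ε ^ ((1:ℝ)/3) := by
      have : ε ^ ((1:ℝ)/3) = ε ^ (-(2:ℝ)/3) * ε := by
        rw [show (1:ℝ)/3 = -(2:ℝ)/3 + 1 by norm_num, Real.rpow_add hε, Real.rpow_one]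
      rw [this]; ring
    nlinarith [hkey]
  have hto := ENNReal.toReal_mono ENNReal.ofReal_ne_top hcomb
  rw [ENNReal.toReal_ofReal (by positivity)] at hto
  rw [volume_G, ENNReal.toReal_one]
  have heps : ε ≤ ε ^ ((1:ℝ)/3) := by
    have := Real.rpow_le_rpow_of_exponent_ge hε hε1 (by norm_num : (1:ℝ)/3 ≤ 1)
    rwa [Real.rpow_one] at this
  linarith



noncomputable def ek (k : ℕ) : ℝ := 1 / (4 * ((k:ℝ) + 1) * Real.sqrt ((k:ℝ) + 1))

lemma ek_pos (k : ℕ) : 0 < ek k := by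
  have := sqrt_pos' k
  rw [ek]; positivity

lemma ek_le_one (k : ℕ) : ek k ≤ 1 := by
  have h := sqrt_pos' k
  have h1 : (1:ℝ) ≤ Real.sqrt ((k:ℝ)+1) :=
    Real.one_le_sqrt.2 (by linarith [show (0:ℝ) ≤ k from Nat.cast_nonneg k])
  rw [ek, div_le_one (by positivity)]
  nlinarith

lemma thick_lower (k : ℕ) (hk : 1 ≤ k) :
    1 + 2*(k:ℝ)*(ek k) ≤ (volume (cthickening (ek k) G)).toReal := by
  have hε0 : 0 < ek k := ek_pos k
  set ε := ek k with hεdef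
  set I : ℕ → Set ℝ := fun n => Set.Ioc (f n - ε) (f n + ε) with hI
  have hsqk : 0 < Real.sqrt ((k:ℝ)+1) := sqrt_pos' k
  -- each n < k : f n ≥ 1 + ε
  have hone : ∀ n, n < k → 1 + ε ≤ f n := by
    intro n hn
    have hnk : ((n:ℝ)+1) ≤ ((k:ℝ)+1) := by
      have : (n:ℝ) ≤ k := by exact_mod_cast hn.le
      linarith
    have h1 : (Real.sqrt ((k:ℝ)+1))⁻¹ ≤ (Real.sqrt ((n:ℝ)+1))⁻¹ :=
      inv_anti₀ (sqrt_pos' n) (Real.sqrt_le_sqrt hnk)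
    have h2 : ε ≤ (Real.sqrt ((k:ℝ)+1))⁻¹ := by
      rw [hεdef, ek, inv_eq_one_div]
      apply one_div_le_one_div_of_le hsqk
      nlinarith
    simp only [f]
    linarith
  -- gaps
  have hgap : ∀ m n, m < n → n < k → f n + ε ≤ f m - ε := by
    intro m n hmn hnk
    have h1 : f n ≤ f (m+1) := by
      rcases eq_or_lt_of_le (Nat.succ_le_of_lt hmn) with h | h
      · rw [← h]
      · exact (f_antitone h).le
    have h2 := gap m
    have hm2 : ((m:ℝ)+2) ≤ ((k:ℝ)+1) := by
      have : (m:ℝ) + 1 ≤ (k:ℝ) := by exact_mod_cast Nat.succ_le_of_lt (hmn.trans hnk)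
      linarith
    have hsqm : 0 < Real.sqrt ((m:ℝ)+2) := Real.sqrt_pos.2 (by positivity)
    have h3 : 2*ε ≤ 1 / (2*((m:ℝ)+2)*Real.sqrt ((m:ℝ)+2)) := by
      rw [hεdef, ek]
      rw [show 2 * (1 / (4 * ((k:ℝ) + 1) * Real.sqrt ((k:ℝ) + 1)))
            = 1 / (2 * ((k:ℝ) + 1) * Real.sqrt ((k:ℝ) + 1)) by field_simp; ring]
      apply one_div_le_one_div_of_le (by positivity)
      have := Real.sqrt_le_sqrt hm2
      nlinarith
    linarith
  -- disjointness
  have hd : ∀ m n, m < n → n < k → Disjoint (I m) (I n) := by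
    intro m n hmn hnk
    have hg := hgap m n hmn hnk
    rw [Set.disjoint_left]
    rintro x ⟨hx1, _⟩ ⟨_, hx4⟩
    linarith
  have hdisj : (↑(Finset.range k) : Set ℕ).PairwiseDisjoint I := by
    intro m hm n hn hmn
    simp only [Finset.coe_range, Set.mem_Iio] at hm hn
    rcases hmn.lt_or_gt with h | h
    · exact hd m n h hn
    · exact (hd n m h hm).symm
  -- measure of union of the Ioc's
  have hmeas : volume (⋃ n ∈ Finset.range k, I n) = (k:ℝ≥0∞) * ENNReal.ofReal (2*ε) := by
    rw [measure_biUnion_finset hdisj (fun n _ => measurableSet_Ioc)]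
    have hterm : ∀ n ∈ Finset.range k,
        volume (Set.Ioc (f n - ε) (f n + ε)) = ENNReal.ofReal (2*ε) := fun n _ => by
      rw [Real.volume_Ioc]; congr 1; ring
    calc ∑ n ∈ Finset.range k, volume (I n)
        = ∑ _n ∈ Finset.range k, ENNReal.ofReal (2*ε) := Finset.sum_congr rfl hterm
      _ = (k:ℝ≥0∞) * ENNReal.ofReal (2*ε) := by
          rw [Finset.sum_const, Finset.card_range, nsmul_eq_mul]
  -- inclusion
  have hsub2 : Set.Icc (0:ℝ) 1 ∪ (⋃ n ∈ Finset.range k, I n) ⊆ cthickening ε G := by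
    apply Set.union_subset
    · exact subset_trans Set.subset_union_left (self_subset_cthickening G)
    · refine Set.iUnion₂_subset fun n hn => ?_
      refine subset_trans Set.Ioc_subset_Icc_self ?_
      rw [← Real.closedBall_eq_Icc]
      exact closedBall_subset_cthickening (f_mem_G n) ε
  -- disjoint from the interval
  have hdisj2 : Disjoint (Set.Icc (0:ℝ) 1) (⋃ n ∈ Finset.range k, I n) := by
    rw [Set.disjoint_right]
    intro x hx hxIcc
    simp only [Set.mem_iUnion] at hx
    obtain ⟨n, hn, hxn⟩ := hx
    have h1 := hone n (Finset.mem_range.1 hn)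
    have h2 := hxn.1
    have h3 := hxIcc.2
    linarith
  have hmeas2 : MeasurableSet (⋃ n ∈ Finset.range k, I n) :=
    (Finset.range k).measurableSet_biUnion (fun n _ => measurableSet_Ioc)
  have htot : ENNReal.ofReal (1 + 2*(k:ℝ)*ε) ≤ volume (cthickening ε G) := by
    calc ENNReal.ofReal (1 + 2*(k:ℝ)*ε)
        = volume (Set.Icc (0:ℝ) 1) + (k:ℝ≥0∞) * ENNReal.ofReal (2*ε) := by
          rw [Real.volume_Icc, ← ENNReal.ofReal_natCast, ← ENNReal.ofReal_mul (by positivity),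
            ← ENNReal.ofReal_add (by norm_num) (by positivity)]
          congr 1; ring
      _ = volume (Set.Icc (0:ℝ) 1 ∪ ⋃ n ∈ Finset.range k, I n) := by
          rw [measure_union hdisj2 hmeas2, hmeas]
      _ ≤ volume (cthickening ε G) := measure_mono hsub2
  have hne : volume (cthickening ε G) ≠ ⊤ := compactG.cthickening.measure_lt_top.ne
  have := ENNReal.toReal_mono hne htot
  rwa [ENNReal.toReal_ofReal (by positivity)] at this



lemma holder_eq : holderReg G = 1 := by
  rw [holderReg]
  have hmem : (1:ℝ) ∈ {α : ℝ | 0 ≤ α ∧ ∃ C : ℝ, 0 < C ∧ ∀ h : ℝ,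
      (volume (symmDiff ((fun x => x + h) '' G) G)).toReal ≤ C * ‖h‖ ^ α} := by
    refine ⟨zero_le_one, 2, two_pos, fun h => ?_⟩
    have h1 := ENNReal.toReal_mono ENNReal.ofReal_ne_top (volume_symmDiff_le h)
    rw [ENNReal.toReal_ofReal (by positivity)] at h1
    rw [Real.rpow_one, Real.norm_eq_abs]
    linarith
  have hub : ∀ α ∈ {α : ℝ | 0 ≤ α ∧ ∃ C : ℝ, 0 < C ∧ ∀ h : ℝ,
      (volume (symmDiff ((fun x => x + h) '' G) G)).toReal ≤ C * ‖h‖ ^ α}, α ≤ 1 := by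
    rintro α ⟨hα0, C, hC, hall⟩
    by_contra hgt
    push_neg at hgt
    set p := α - 1 with hp
    have hp0 : 0 < p := by rw [hp]; linarith
    have key : ∀ h : ℝ, 0 < h → h ≤ 1 → 1 ≤ C * h ^ p := by
      intro h h0 h1
      have hlow : h ≤ (volume (symmDiff ((fun x => x + h) '' G) G)).toReal := by
        have := ENNReal.toReal_mono (symmDiff_ne_top h) (symmDiff_lower h h0 h1)
        rwa [ENNReal.toReal_ofReal h0.le] at this
      have hup := hall h
      rw [Real.norm_eq_abs, abs_of_pos h0] at hup
      have hsplit : h ^ α = h ^ p * h := by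
        rw [show α = p + 1 by rw [hp]; ring, Real.rpow_add h0, Real.rpow_one]
      rw [hsplit] at hup
      have h2 : h ≤ C * h ^ p * h := by rw [mul_assoc]; linarith
      have h3 : 1 * h ≤ C * h ^ p * h := by rw [one_mul]; exact h2
      exact le_of_mul_le_mul_right h3 h0
    set h₀ : ℝ := min 1 ((1/(2*C)) ^ p⁻¹) with hh₀
    have hpos : 0 < h₀ := lt_min one_pos (Real.rpow_pos_of_pos (by positivity) _)
    have hle1 : h₀ ≤ 1 := min_le_left _ _
    have hpow : h₀ ^ p ≤ 1/(2*C) := by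
      calc h₀ ^ p ≤ ((1/(2*C)) ^ p⁻¹) ^ p :=
            Real.rpow_le_rpow hpos.le (min_le_right _ _) hp0.le
        _ = 1/(2*C) := Real.rpow_inv_rpow (by positivity) hp0.ne'
    have h4 := key h₀ hpos hle1
    have h5 : C * h₀ ^ p ≤ C * (1/(2*C)) := by
      apply mul_le_mul_of_nonneg_left hpow hC.le
    have h6 : C * (1/(2*C)) = 1/2 := by field_simp
    linarith
  exact le_antisymm (csSup_le ⟨1, hmem⟩ hub) (le_csSup ⟨1, hub⟩ hmem)

lemma surf_eq : surfReg G = 1/3 := by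
  rw [surfReg]
  have hmem : (1/3:ℝ) ∈ {s : ℝ | 0 ≤ s ∧ ∃ C : ℝ, 0 < C ∧ ∀ ε : ℝ, 0 < ε → ε ≤ 1 →
      (volume (cthickening ε G)).toReal - (volume G).toReal ≤ C * ε ^ s} :=
    ⟨by norm_num, 9, by norm_num, fun ε hε hε1 => thick_upper hε hε1⟩
  have hub : ∀ s ∈ {s : ℝ | 0 ≤ s ∧ ∃ C : ℝ, 0 < C ∧ ∀ ε : ℝ, 0 < ε → ε ≤ 1 →
      (volume (cthickening ε G)).toReal - (volume G).toReal ≤ C * ε ^ s}, s ≤ 1/3 := by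
    rintro s ⟨hs0, C, hC, hall⟩
    by_contra hgt
    push_neg at hgt
    set p := (3*s - 1)/2 with hp
    have hp0 : 0 < p := by rw [hp]; linarith
    set k : ℕ := max 1 ⌈(4*C+1) ^ p⁻¹⌉₊ with hk
    have hk1 : 1 ≤ k := le_max_left _ _
    set t : ℝ := (k:ℝ) + 1 with ht
    have hk0 : (1:ℝ) ≤ (k:ℝ) := by exact_mod_cast hk1
    have ht0 : (0:ℝ) < t := by rw [ht]; linarith
    have htp : 4*C + 1 ≤ t ^ p := by
      have h1 : ((4*C+1) ^ p⁻¹ : ℝ) ≤ t := by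
        have h2 := Nat.le_ceil ((4*C+1) ^ p⁻¹)
        have h3 : (⌈(4*C+1) ^ p⁻¹⌉₊ : ℝ) ≤ (k:ℝ) := by
          exact_mod_cast le_max_right 1 ⌈(4*C+1) ^ p⁻¹⌉₊
        rw [ht]; linarith
      calc 4*C+1 = (((4*C+1) ^ p⁻¹ : ℝ)) ^ p := (Real.rpow_inv_rpow (by positivity) hp0.ne').symm
        _ ≤ t ^ p := Real.rpow_le_rpow (by positivity) h1 hp0.le
    have hε0 := ek_pos k
    have hε1 := ek_le_one k
    have hlow := thick_lower k hk1
    have hup := hall (ek k) hε0 hε1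
    rw [volume_G, ENNReal.toReal_one] at hup
    have hchain : 2*(k:ℝ)*(ek k) ≤ C * (ek k) ^ s := by linarith
    have hsqt : Real.sqrt t = t ^ ((1:ℝ)/2) := Real.sqrt_eq_rpow t
    have hek : ek k = (1/4) * t ^ (-(3:ℝ)/2) := by
      rw [ek, ← ht, show -(3:ℝ)/2 = -((3:ℝ)/2) by norm_num, Real.rpow_neg ht0.le,
        show (3:ℝ)/2 = 1 + 1/2 by norm_num, Real.rpow_add ht0, Real.rpow_one, ← hsqt]
      field_simp
    have hek_pow : (ek k) ^ s = (1/4 : ℝ) ^ s * t ^ (-(3:ℝ)/2 * s) := by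
      rw [hek, Real.mul_rpow (by norm_num) (Real.rpow_nonneg ht0.le _), ← Real.rpow_mul ht0.le]
    have h14 : ((1/4:ℝ)) ^ s ≤ 1 := Real.rpow_le_one (by norm_num) (by norm_num) hs0
    have hCbound : C * (ek k) ^ s ≤ C * t ^ (-(3:ℝ)/2 * s) := by
      rw [hek_pow]
      have h0 := Real.rpow_nonneg ht0.le (-(3:ℝ)/2 * s)
      have h2 : (1/4:ℝ) ^ s * t ^ (-(3:ℝ)/2 * s) ≤ t ^ (-(3:ℝ)/2 * s) := by
        nlinarith
      exact mul_le_mul_of_nonneg_left h2 hC.le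
    have hLHS : (1/4:ℝ) * t ^ (-(1:ℝ)/2) ≤ 2*(k:ℝ)*(ek k) := by
      rw [hek]
      have hh : t ^ (-(1:ℝ)/2) = t * t ^ (-(3:ℝ)/2) := by
        rw [show (-(1:ℝ)/2) = 1 + (-(3:ℝ)/2) by norm_num, Real.rpow_add ht0, Real.rpow_one]
      rw [hh]
      have hkt : t/2 ≤ (k:ℝ) := by rw [ht]; linarith
      have hpos : 0 < t ^ (-(3:ℝ)/2) := Real.rpow_pos_of_pos ht0 _
      nlinarith
    have hfin : (1/4:ℝ) * t ^ (-(1:ℝ)/2) ≤ C * t ^ (-(3:ℝ)/2 * s) :=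
      le_trans hLHS (le_trans hchain hCbound)
    have e1 : t ^ ((3:ℝ)/2*s) * t ^ (-(1:ℝ)/2) = t ^ p := by
      rw [← Real.rpow_add ht0]; congr 1; rw [hp]; ring
    have e2 : t ^ ((3:ℝ)/2*s) * t ^ (-(3:ℝ)/2*s) = 1 := by
      rw [← Real.rpow_add ht0, show (3:ℝ)/2*s + -(3:ℝ)/2*s = 0 by ring, Real.rpow_zero]
    have h5 := mul_le_mul_of_nonneg_left hfin (Real.rpow_nonneg ht0.le ((3:ℝ)/2*s))
    have hmul : t ^ p ≤ 4*C := by nlinarith [h5, e1, e2]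
    linarith
  exact le_antisymm (csSup_le ⟨1/3, hmem⟩ hub) (le_csSup ⟨1/3, hub⟩ hmem)


end TileAux

/-- There is a compact tile `G ⊂ ℝ` (integer translates cover `ℝ` and pairwise intersect in
measure zero) with `α(G) = 1` and `s(G) = 1/3`. -/
theorem exists_tile_holder_one_surf_third :
    ∃ G : Set ℝ, IsCompact G ∧
      (⋃ k : ℤ, (fun x => x + (k : ℝ)) '' G) = Set.univ ∧
      (∀ k l : ℤ, k ≠ l →
        volume (((fun x => x + (k : ℝ)) '' G) ∩ ((fun x => x + (l : ℝ)) '' G)) = 0) ∧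
      holderReg G = 1 ∧ surfReg G = 1 / 3 := by
  exact ⟨TileAux.G, TileAux.compactG, TileAux.cover, TileAux.overlap,
    TileAux.holder_eq, TileAux.surf_eq⟩
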